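/- Fix an integer t ≥ 1 and define the polynomial sequences P_0(r), P_1(r) ∈ ℝ[p] as in the context. Then the coefficients of p satisfy: [p]P_0(1) = −t/2^t and [p]P_1(1) = −t/2^t, and for every r ≥ 2: [p]P_1(r) = (1 − 2^{−t})·[p]P_0(r−1) + ((t+2)/2^t − 2)·[1]P_0(r−1) + 2·(1 − (t+1)/2^t)·([1]P_0(r−1))², and [p]P_0(r) = (1 − 2^{−t})·[p]P_1(r−1) + ((t+2)/2^t − 2)·[1]P_1(r−1) + 2·(1 − (t+1)/2^t)·([1]P_1(r−1))² − t/2^t + (2t/2^t)·[1]P_1(r−1). -/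

import Mathlib

/-! ## Decision trees -/

/-- Binary decision trees over a variable index type `ι`.  An internal vertex
`node i t0 t1` queries variable `i`; the `0`-edge leads to `t0`, the `1`-edge to `t1`. -/
inductive DTree (ι : Type) : Type where
  | leaf : Bool → DTree ι
  | node : ι → DTree ι → DTree ι → DTree ι

namespace DTree

variable {ι : Type}

/-- Evaluate a decision tree on an input. -/
def eval : DTree ι → (ι → Bool) → Bool
  | leaf b, _ => b
  | node i t0 t1, x => if x i then t1.eval x else t0.eval x

/-- Depth: the number of edges on the longest root-to-leaf path. -/
def depth : DTree ι → ℕ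
  | leaf _ => 0
  | node _ t0 t1 => max t0.depth t1.depth + 1

/-- Distance from the root to the closest leaf. -/
def minLeafDepth : DTree ι → ℕ
  | leaf _ => 0
  | node _ t0 t1 => min t0.minLeafDepth t1.minLeafDepth + 1

/-- A tree is `t`-clipped if every vertex is within distance `t` of some leaf. -/
def Clipped (t : ℕ) : DTree ι → Prop
  | leaf _ => True
  | node _ t0 t1 =>
      min t0.minLeafDepth t1.minLeafDepth + 1 ≤ t ∧ Clipped t t0 ∧ Clipped t t1

/-- No variable in `seen` (nor any variable already queried above) is queried again:
this captures "no variable appears more than once on any root-to-leaf path". -/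
def ReadOnceFrom : List ι → DTree ι → Prop
  | _, leaf _ => True
  | seen, node i t0 t1 =>
      i ∉ seen ∧ ReadOnceFrom (i :: seen) t0 ∧ ReadOnceFrom (i :: seen) t1

/-- No variable appears more than once on any root-to-leaf path. -/
def ReadOnce (T : DTree ι) : Prop := T.ReadOnceFrom []

/-- `T` computes the boolean function `f`. -/
def Computes (T : DTree ι) (f : (ι → Bool) → Bool) : Prop := ∀ x, T.eval x = f x

/-- The list of all variables labelling internal vertices of the tree. -/
def nodeVars : DTree ι → List ι
  | leaf _ => []
  | node i t0 t1 => i :: (t0.nodeVars ++ t1.nodeVars)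

/-- The tree has some leaf labelled `b`. -/
def HasLeaf (b : Bool) : DTree ι → Prop
  | leaf c => c = b
  | node _ t0 t1 => HasLeaf b t0 ∨ HasLeaf b t1

/-- From every internal vertex there is a path to a leaf labelled 0 (`false`)
and a path to a leaf labelled 1 (`true`). -/
def EverySplit : DTree ι → Prop
  | leaf _ => True
  | node _ t0 t1 =>
      (HasLeaf true t0 ∨ HasLeaf true t1) ∧ (HasLeaf false t0 ∨ HasLeaf false t1) ∧
        EverySplit t0 ∧ EverySplit t1

/-- Variable `y` labels some internal vertex at distance `d` (edges) from the root. -/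
def OccursAt (y : ι) : ℕ → DTree ι → Prop
  | _, leaf _ => False
  | 0, node i _ _ => i = y
  | d + 1, node _ t0 t1 => OccursAt y d t0 ∨ OccursAt y d t1

end DTree

/-- `DTdepth f` is the minimum depth of a decision tree computing `f`. -/
noncomputable def DTdepth {ι : Type} (f : (ι → Bool) → Bool) : ℕ :=
  sInf {d | ∃ T : DTree ι, T.ReadOnce ∧ T.Computes f ∧ T.depth ≤ d}

/-! ## Restrictions -/

/-- The function obtained by fixing each variable `i` with `ρ i = some b` to `b`
(variables with `ρ i = none`, i.e. assigned `*`, are left free). -/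
def restrictFun {ι : Type} (f : (ι → Bool) → Bool) (ρ : ι → Option Bool) :
    (ι → Bool) → Bool :=
  fun x => f (fun i => (ρ i).getD (x i))

open Classical in
/-- The probability of the event `E` under a random `p`-restriction: each variable
independently gets `*` (i.e. `none`) with probability `p`, and each of the values
`0`, `1` with probability `(1-p)/2`. -/
noncomputable def restrProb {ι : Type} [Fintype ι] [DecidableEq ι] (p : ℝ)
    (E : (ι → Option Bool) → Prop) : ℝ :=
  ∑ ρ : ι → Option Bool,
    (if E ρ then ∏ i : ι, (if ρ i = none then p else (1 - p) / 2) else 0)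

/-! ## Tree tribes -/

/-- The variable index type of the complete `t`-clipped tree `W_t(r)` on `r` levels:
the first block `v_1, …, v_t`, plus, for each `k < t`, a fresh copy of the variables
of `W_t(r-1)` hanging off the 1-edge of `v_{k+1}`. -/
def XiVars (t : ℕ) : ℕ → Type
  | 0 => Empty
  | r + 1 => Fin t ⊕ (Fin t × XiVars t r)

instance XiVars.instFintype (t : ℕ) : ∀ r, Fintype (XiVars t r)
  | 0 => inferInstanceAs (Fintype Empty)
  | r + 1 =>
      letI := XiVars.instFintype t r
      inferInstanceAs (Fintype (Fin t ⊕ (Fin t × XiVars t r)))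

instance XiVars.instDecidableEq (t : ℕ) : ∀ r, DecidableEq (XiVars t r)
  | 0 => inferInstanceAs (DecidableEq Empty)
  | r + 1 =>
      letI := XiVars.instDecidableEq t r
      inferInstanceAs (DecidableEq (Fin t ⊕ (Fin t × XiVars t r)))

/-- The `t`-clipped xor tree tribe `Ξ_t(r)`: the function computed by `W_t(r)` with
each leaf labelled by the parity of the edge labels on its root-to-leaf path.
Following the 0-edges `v_1 → v_2 → ⋯` until the first variable with value 1 (if any),
whose 1-edge leads to a fresh copy computing the negation of `Ξ_t(r-1)`. -/
def Xi (t : ℕ) : ∀ r, (XiVars t r → Bool) → Bool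
  | 0, _ => false
  | r + 1, x =>
      match (List.finRange t).find? (fun i => x (Sum.inl i)) with
      | none => false
      | some k => ! Xi t r (fun v => x (Sum.inr (k, v)))

namespace XiVars

/-- The list of 1-branch positions (0-indexed within each block) taken on the path
from the root to the block containing the given variable. -/
def branches {t : ℕ} : ∀ {r : ℕ}, XiVars t r → List (Fin t)
  | 0, v => nomatch v
  | _ + 1, Sum.inl _ => []
  | _ + 1, Sum.inr (k, w) => k :: branches w

/-- The (0-indexed) position of the variable within its block. -/
def pos {t : ℕ} : ∀ {r : ℕ}, XiVars t r → Fin t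
  | 0, v => nomatch v
  | _ + 1, Sum.inl i => i
  | _ + 1, Sum.inr (_, w) => pos w

/-- The level of a variable: the recursive step at which it was added (level 1 is the
outermost block). -/
def level {t r : ℕ} (v : XiVars t r) : ℕ := (branches v).length + 1

/-- The distance (number of edges) from the root of `W_t(r)` to the vertex of `v`. -/
def rootDist {t r : ℕ} (v : XiVars t r) : ℕ :=
  ((branches v).map (fun b => (b : ℕ) + 1)).sum + (pos v : ℕ)

/-- The distance from the vertex of `v` to the closest leaf of `W_t(r)`. -/
def leafDist {t r : ℕ} (v : XiVars t r) : ℕ :=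
  min (t - (pos v : ℕ)) (1 + min t (r - level v))

/-- A root-to-leaf path of `W_t(r)` is determined by the list `L` of 1-branch positions
it takes (with `L.length ≤ r`); `v.onPath L` says the vertex of `v` lies on that path. -/
def onPath {t r : ℕ} (v : XiVars t r) (L : List (Fin t)) : Prop :=
  branches v = L ∨
    (branches v <+: L ∧ branches v ≠ L ∧
      ∃ b : Fin t, L[(branches v).length]? = some b ∧ pos v ≤ b)

end XiVars

/-- For `t = 1`, `Ξ_1(n)` is computed by a path on `n` variables: vertex `x_i` has a
0-edge to a leaf and a 1-edge to `x_{i+1}`, leaves labelled by the parity of the edge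
labels from the root. -/
def Xi1 : ∀ n, (Fin n → Bool) → Bool
  | 0, _ => false
  | n + 1, x => if x 0 then ! Xi1 n (fun i => x i.succ) else false

/-! ## Fourier coefficients -/

/-- The Fourier coefficient `f̂_S` of a boolean function, viewed as a function
`{−1,1}^n → {−1,1}` via the identification `false ↔ +1`, `true ↔ −1`:
`f̂_S = E_x[f(x) ∏_{i ∈ S} x_i]` over a uniformly random input. -/
noncomputable def fourierCoeffB {ι : Type} [Fintype ι] [DecidableEq ι]
    (f : (ι → Bool) → Bool) (S : Finset ι) : ℝ :=
  (∑ x : ι → Bool,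
      (if f x then (-1 : ℝ) else 1) * ∏ i ∈ S, (if x i then (-1 : ℝ) else 1)) /
    2 ^ Fintype.card ι

/-- The `i`-th Jacobsthal number `J_i = (2^i − (−1)^i)/3`, as a real number. -/
noncomputable def jacobsthal (i : ℕ) : ℝ := (2 ^ i - (-1) ^ i) / 3

/-- The parity (mod-2 sum) of all the bits of `x`. -/
def parityBool {ι : Type} [Fintype ι] [DecidableEq ι] (x : ι → Bool) : Bool :=
  decide ((Finset.univ.filter fun i => x i = true).card % 2 = 1)

/-! ## The probabilities `P_0(r)`, `P_1(r)` and `γ_d(r)` -/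

/-- `P_0(r)`: the probability that `Ξ_t(r)` restricted by a random `p`-restriction is
the identically-`0` function. -/
noncomputable def Pzero (t : ℕ) (p : ℝ) (r : ℕ) : ℝ :=
  restrProb p (fun ρ : XiVars t r → Option Bool => ∀ x, restrictFun (Xi t r) ρ x = false)

/-- `P_1(r)`: the probability that `Ξ_t(r)` restricted by a random `p`-restriction is
the identically-`1` function. -/
noncomputable def Pone (t : ℕ) (p : ℝ) (r : ℕ) : ℝ :=
  restrProb p (fun ρ : XiVars t r → Option Bool => ∀ x, restrictFun (Xi t r) ρ x = true)

/-- `γ_d(r) = Pr_ρ[DT_depth(Ξ_t(r)|_ρ) ≥ d]` for a random `p`-restriction `ρ`. -/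
noncomputable def gammaDT (t : ℕ) (p : ℝ) (d r : ℕ) : ℝ :=
  restrProb p (fun ρ : XiVars t r → Option Bool => d ≤ DTdepth (restrictFun (Xi t r) ρ))

/-! ## The polynomial sequences `P_0(r), P_1(r) ∈ ℝ[p]` -/

/-- The polynomial `q = (1 − p)/2 ∈ ℝ[p]`. -/
noncomputable def qP : Polynomial ℝ := Polynomial.C (1 / 2) * (1 - Polynomial.X)

/-- The pair of polynomials `(P_0(r), P_1(r)) ∈ ℝ[p] × ℝ[p]`, defined by
`P_0(1) = q^t`, `P_1(1) = 1 − (1−q)^t`, and for `r ≥ 2`, with `U = P_1(r−1)` and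
`V = P_0(r−1)`: `P_0(r) = q·U·∑_{k=0}^{t−1}(q+pU)^k + (q+pU)^t` and
`P_1(r) = q·V·∑_{k=0}^{t−1}(q+pV)^k`.  (The value at `r = 0` is junk.) -/
noncomputable def PP (t : ℕ) : ℕ → Polynomial ℝ × Polynomial ℝ
  | 0 => (1, 0)
  | 1 => (qP ^ t, 1 - (1 - qP) ^ t)
  | r + 2 =>
      (qP * (PP t (r + 1)).2 *
          (∑ k ∈ Finset.range t, (qP + Polynomial.X * (PP t (r + 1)).2) ^ k) +
        (qP + Polynomial.X * (PP t (r + 1)).2) ^ t,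
       qP * (PP t (r + 1)).1 *
          (∑ k ∈ Finset.range t, (qP + Polynomial.X * (PP t (r + 1)).1) ^ k))

/-- The polynomial `P_0(r) ∈ ℝ[p]`. -/
noncomputable def P0poly (t r : ℕ) : Polynomial ℝ := (PP t r).1

/-- The polynomial `P_1(r) ∈ ℝ[p]`. -/
noncomputable def P1poly (t r : ℕ) : Polynomial ℝ := (PP t r).2

lemma coeff1_mul' (p q : Polynomial ℝ) :
    (p * q).coeff 1 = p.coeff 0 * q.coeff 1 + p.coeff 1 * q.coeff 0 := by
  rw [Polynomial.coeff_mul, Finset.Nat.sum_antidiagonal_eq_sum_range_succ_mk]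
  simp [Finset.sum_range_succ]

lemma qP_coeff0 : qP.coeff 0 = 1 / 2 := by
  simp [qP]

lemma qP_coeff1 : qP.coeff 1 = -(1 / 2) := by
  simp [qP, Polynomial.coeff_one]

lemma pow_coeffs (A : Polynomial ℝ) (h : A.coeff 0 = 1 / 2) (t : ℕ) :
    (A ^ t).coeff 0 = (1 / 2 : ℝ) ^ t ∧
    (A ^ t).coeff 1 = 2 * t * (1 / 2 : ℝ) ^ t * A.coeff 1 := by
  induction t with
  | zero => simp [Polynomial.coeff_one]
  | succ n ih =>
      rw [pow_succ]
      constructor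
      · rw [Polynomial.mul_coeff_zero, ih.1, h]; ring
      · rw [coeff1_mul', ih.1, ih.2, h]; push_cast; ring

lemma geo_sum (t : ℕ) : ∑ k ∈ Finset.range t, ((1 : ℝ) / 2) ^ k = 2 - 2 * (1 / 2) ^ t := by
  induction t with
  | zero => simp
  | succ n ih => rw [Finset.sum_range_succ, ih]; ring

lemma geo_sum_k (t : ℕ) :
    ∑ k ∈ Finset.range t, 2 * (k : ℝ) * (1 / 2) ^ k = 4 - (4 * t + 4) * (1 / 2) ^ t := by
  induction t with
  | zero => simp
  | succ n ih => rw [Finset.sum_range_succ, ih]; push_cast; ring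

lemma A_coeff0 (W : Polynomial ℝ) : (qP + Polynomial.X * W).coeff 0 = 1 / 2 := by
  rw [Polynomial.coeff_add, qP_coeff0, Polynomial.mul_coeff_zero]
  simp

lemma A_coeff1 (W : Polynomial ℝ) :
    (qP + Polynomial.X * W).coeff 1 = W.coeff 0 - 1 / 2 := by
  rw [Polynomial.coeff_add, qP_coeff1, coeff1_mul']
  simp [Polynomial.coeff_one]
  ring

lemma S_coeff0 (t : ℕ) (W : Polynomial ℝ) :
    (∑ k ∈ Finset.range t, (qP + Polynomial.X * W) ^ k).coeff 0 =
      2 - 2 * (1 / 2 : ℝ) ^ t := by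
  rw [Polynomial.finset_sum_coeff]
  rw [Finset.sum_congr rfl fun k _ => (pow_coeffs _ (A_coeff0 W) k).1]
  exact geo_sum t

lemma S_coeff1 (t : ℕ) (W : Polynomial ℝ) :
    (∑ k ∈ Finset.range t, (qP + Polynomial.X * W) ^ k).coeff 1 =
      (4 - (4 * t + 4) * (1 / 2 : ℝ) ^ t) * (W.coeff 0 - 1 / 2) := by
  rw [Polynomial.finset_sum_coeff]
  rw [Finset.sum_congr rfl fun k _ => (pow_coeffs _ (A_coeff0 W) k).2]
  rw [A_coeff1]
  rw [← Finset.sum_mul, ← geo_sum_k t]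

lemma F_coeff1 (t : ℕ) (W : Polynomial ℝ) :
    (qP * W * ∑ k ∈ Finset.range t, (qP + Polynomial.X * W) ^ k).coeff 1 =
      (1 - (1 / 2 : ℝ) ^ t) * W.coeff 1 +
        (((t : ℝ) + 2) / 2 ^ t - 2) * W.coeff 0 +
        2 * (1 - ((t : ℝ) + 1) / 2 ^ t) * (W.coeff 0) ^ 2 := by
  rw [coeff1_mul', Polynomial.mul_coeff_zero, coeff1_mul', qP_coeff0, qP_coeff1,
    S_coeff0, S_coeff1]
  have h2 : ((2 : ℝ) ^ t)⁻¹ = (1 / 2 : ℝ) ^ t := by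
    rw [one_div, inv_pow]
  simp only [one_div_pow]
  field_simp
  ring

lemma At_coeff1 (t : ℕ) (W : Polynomial ℝ) :
    ((qP + Polynomial.X * W) ^ t).coeff 1 =
      -(t : ℝ) / 2 ^ t + (2 * (t : ℝ) / 2 ^ t) * W.coeff 0 := by
  rw [(pow_coeffs _ (A_coeff0 W) t).2, A_coeff1]
  have h2 : ((2 : ℝ) ^ t)⁻¹ = (1 / 2 : ℝ) ^ t := by
    rw [one_div, inv_pow]
  simp only [one_div_pow]
  field_simp
  ring

/-- coefficients of `p` in `P_0(r), P_1(r)`: `[p]P_0(1) = [p]P_1(1) =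
−t/2^t`, and for `r ≥ 2` the stated recurrences hold. -/
theorem ppoly_linear_coeff_recurrence (t : ℕ) (ht : 1 ≤ t) :
    (P0poly t 1).coeff 1 = -(t : ℝ) / 2 ^ t ∧
    (P1poly t 1).coeff 1 = -(t : ℝ) / 2 ^ t ∧
    ∀ r : ℕ, 2 ≤ r →
      (P1poly t r).coeff 1 =
          (1 - (1 / 2 : ℝ) ^ t) * (P0poly t (r - 1)).coeff 1 +
            (((t : ℝ) + 2) / 2 ^ t - 2) * (P0poly t (r - 1)).coeff 0 +
            2 * (1 - ((t : ℝ) + 1) / 2 ^ t) * ((P0poly t (r - 1)).coeff 0) ^ 2 ∧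
        (P0poly t r).coeff 1 =
          (1 - (1 / 2 : ℝ) ^ t) * (P1poly t (r - 1)).coeff 1 +
            (((t : ℝ) + 2) / 2 ^ t - 2) * (P1poly t (r - 1)).coeff 0 +
            2 * (1 - ((t : ℝ) + 1) / 2 ^ t) * ((P1poly t (r - 1)).coeff 0) ^ 2 -
            (t : ℝ) / 2 ^ t + (2 * (t : ℝ) / 2 ^ t) * (P1poly t (r - 1)).coeff 0 := by
  have h2 : ((2 : ℝ) ^ t)⁻¹ = (1 / 2 : ℝ) ^ t := by rw [one_div, inv_pow]
  refine ⟨?_, ?_, ?_⟩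
  · have : P0poly t 1 = qP ^ t := rfl
    rw [this, (pow_coeffs _ qP_coeff0 t).2, qP_coeff1]
    simp only [one_div_pow]
    field_simp
  · have : P1poly t 1 = 1 - (1 - qP) ^ t := rfl
    have h0 : (1 - qP).coeff 0 = 1 / 2 := by
      rw [Polynomial.coeff_sub, qP_coeff0]; norm_num [Polynomial.coeff_one]
    rw [this, Polynomial.coeff_sub, (pow_coeffs _ h0 t).2]
    have h1 : (1 - qP).coeff 1 = 1 / 2 := by
      rw [Polynomial.coeff_sub, qP_coeff1]; norm_num [Polynomial.coeff_one]
    rw [h1]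
    simp only [Polynomial.coeff_one]
    simp only [one_div_pow, one_ne_zero, if_false]
    field_simp
    ring
  · intro r hr
    obtain ⟨n, rfl⟩ : ∃ n, r = n + 2 := ⟨r - 2, by omega⟩
    have hn : n + 2 - 1 = n + 1 := rfl
    rw [hn]
    constructor
    · have : P1poly t (n + 2) =
          qP * (PP t (n + 1)).1 *
            (∑ k ∈ Finset.range t, (qP + Polynomial.X * (PP t (n + 1)).1) ^ k) := rfl
      rw [this, F_coeff1]
      rfl
    · have : P0poly t (n + 2) =
          qP * (PP t (n + 1)).2 *
            (∑ k ∈ Finset.range t, (qP + Polynomial.X * (PP t (n + 1)).2) ^ k) +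
          (qP + Polynomial.X * (PP t (n + 1)).2) ^ t := rfl
      rw [this, Polynomial.coeff_add, F_coeff1, At_coeff1]
      simp only [P1poly]
      ring
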